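/- Let G be a finite group and K a field of prime characteristic p with p not dividing the order of G. Let E₀ = K[G] ⋊ G be the semidirect product of the additive group of the group algebra K[G] with G, where G acts on (K[G],+) by left multiplication; i.e., E₀ = K[G] × G with multiplication (a,g)(b,h) = (a + g·b, gh). Let D₀ = G and D_m = [D_{m−1}, D_{m−1}] for m ≥ 1, and let E_m = [E_{m−1}, E_{m−1}] for m ≥ 1. Then for every m ≥ 1, E_m = { (a, g) : a ∈ ω(K[D_{m−1}])K[G], g ∈ D_m }, where ω(K[D_{m−1}])K[G] denotes the K-linear span of all elements (d − 1)·g with d ∈ D_{m−1} and g ∈ G. -/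

import Mathlib

open MonoidAlgebra

/-- The semidirect product `K[G] ⋊ G` of the additive group of the group algebra
`K[G]` with `G`, where `G` acts on `(K[G],+)` by left multiplication. -/
structure GroupAlgebraSDP (K G : Type*) [Field K] [Group G] where
  /-- the group algebra component -/
  fst : MonoidAlgebra K G
  /-- the group component -/
  snd : G

namespace GroupAlgebraSDP

variable {K G : Type*} [Field K] [Group G]

noncomputable instance : Mul (GroupAlgebraSDP K G) :=
  ⟨fun x y => ⟨x.fst + single x.snd (1 : K) * y.fst, x.snd * y.snd⟩⟩

noncomputable instance : One (GroupAlgebraSDP K G) := ⟨⟨0, 1⟩⟩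

noncomputable instance : Inv (GroupAlgebraSDP K G) :=
  ⟨fun x => ⟨-(single x.snd⁻¹ (1 : K) * x.fst), x.snd⁻¹⟩⟩

theorem mul_def (x y : GroupAlgebraSDP K G) :
    x * y = ⟨x.fst + single x.snd (1 : K) * y.fst, x.snd * y.snd⟩ := rfl

theorem one_def : (1 : GroupAlgebraSDP K G) = ⟨0, 1⟩ := rfl

theorem inv_def (x : GroupAlgebraSDP K G) :
    x⁻¹ = ⟨-(single x.snd⁻¹ (1 : K) * x.fst), x.snd⁻¹⟩ := rfl

noncomputable instance : Group (GroupAlgebraSDP K G) where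
  mul_assoc x y z := by
    cases x; cases y; cases z
    simp only [mul_def, GroupAlgebraSDP.mk.injEq]
    constructor
    · rw [mul_add, ← mul_assoc, single_mul_single, one_mul, add_assoc]
    · rw [mul_assoc]
  one_mul x := by
    cases x
    simp only [mul_def, one_def, zero_add]
    rw [← MonoidAlgebra.one_def, one_mul, one_mul]
  mul_one x := by
    cases x
    simp [mul_def, one_def]
  inv_mul_cancel x := by
    cases x
    simp [mul_def, inv_def, one_def]

end GroupAlgebraSDP

section Aux

open MonoidAlgebra
open scoped commutatorElement

variable {K G : Type*} [Field K] [Group G]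

/-- The ideal `ω(K[D_n])K[G]`. -/
noncomputable def Ispan (K G : Type*) [Field K] [Group G] (n : ℕ) :
    Submodule K (MonoidAlgebra K G) :=
  Submodule.span K
    {w : MonoidAlgebra K G | ∃ d ∈ derivedSeries G n, ∃ g : G,
      w = (MonoidAlgebra.single d (1 : K) - 1) * MonoidAlgebra.single g (1 : K)}

lemma sub_one_mul_mem_Ispan {n : ℕ} {d : G} (hd : d ∈ derivedSeries G n)
    (b : MonoidAlgebra K G) : (single d (1 : K) - 1) * b ∈ Ispan K G n := by
  induction b using MonoidAlgebra.induction_linear with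
  | zero => simpa using zero_mem _
  | add f g hf hg => rw [mul_add]; exact add_mem hf hg
  | single g c =>
      show (single d (1 : K) - 1) * single g c ∈ Ispan K G n
      have h1 : (single d (1 : K) - 1) * single g c
          = c • ((single d (1 : K) - 1) * single g (1 : K)) := by
        rw [← mul_smul_comm, MonoidAlgebra.smul_single', mul_one]
      rw [h1]
      exact Submodule.smul_mem _ _ (Submodule.subset_span ⟨d, hd, g, rfl⟩)

lemma single_mul_mem_Ispan {n : ℕ} (g : G) {a : MonoidAlgebra K G}
    (ha : a ∈ Ispan K G n) : single g (1 : K) * a ∈ Ispan K G n := by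
  have h : Ispan K G n ≤ (Ispan K G n).comap (LinearMap.mulLeft K (single g (1 : K))) := by
    rw [Ispan, Submodule.span_le]
    rintro w ⟨d, hd, g', rfl⟩
    simp only [Set.mem_setOf_eq, SetLike.mem_coe, Submodule.mem_comap, LinearMap.mulLeft_apply]
    have key : single g (1 : K) * ((single d (1 : K) - 1) * single g' (1 : K))
        = (single (g * d * g⁻¹) (1 : K) - 1) * single (g * g') (1 : K) := by
      simp [mul_sub, sub_mul, single_mul_single, mul_assoc]
    rw [key]
    exact Submodule.subset_span ⟨_, (derivedSeries_normal G n).conj_mem d hd g, _, rfl⟩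
  exact h ha

lemma derivedSeries_succ_le (k : ℕ) : derivedSeries G (k + 1) ≤ derivedSeries G k := by
  rw [derivedSeries_succ]
  refine Subgroup.commutator_le.mpr fun x hx y hy => ?_
  rw [commutatorElement_def]
  exact mul_mem (mul_mem (mul_mem hx hy) (inv_mem hx)) (inv_mem hy)

/-- The subgroup of pairs `(a, g)` with `a ∈ Ispan n` and `g ∈ derivedSeries G m`. -/
noncomputable def SP (K G : Type*) [Field K] [Group G] (n m : ℕ) :
    Subgroup (GroupAlgebraSDP K G) where
  carrier := {x | x.fst ∈ Ispan K G n ∧ x.snd ∈ derivedSeries G m}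
  mul_mem' := fun {x y} hx hy =>
    ⟨add_mem hx.1 (single_mul_mem_Ispan _ hy.1), mul_mem hx.2 hy.2⟩
  one_mem' := ⟨zero_mem _, one_mem _⟩
  inv_mem' := fun {x} hx =>
    ⟨neg_mem (single_mul_mem_Ispan _ hx.1), inv_mem hx.2⟩

/-- Projection homomorphism to `G`. -/
def projG : GroupAlgebraSDP K G →* G where
  toFun x := x.snd
  map_one' := rfl
  map_mul' _ _ := rfl

/-- Inclusion homomorphism of `G`. -/
noncomputable def inclG : G →* GroupAlgebraSDP K G where
  toFun g := ⟨0, g⟩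
  map_one' := rfl
  map_mul' g h := by simp [GroupAlgebraSDP.mul_def]

lemma snd_mem_of_mem {m : ℕ} {x : GroupAlgebraSDP K G}
    (hx : x ∈ derivedSeries (GroupAlgebraSDP K G) m) : x.snd ∈ derivedSeries G m :=
  map_derivedSeries_le_derivedSeries (projG (K := K) (G := G)) m ⟨x, hx, rfl⟩

lemma iota_mem {m : ℕ} {g : G} (hg : g ∈ derivedSeries G m) :
    (⟨0, g⟩ : GroupAlgebraSDP K G) ∈ derivedSeries (GroupAlgebraSDP K G) m :=
  map_derivedSeries_le_derivedSeries (inclG (K := K) (G := G)) m ⟨g, hg, rfl⟩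

lemma commutator_fst (x y : GroupAlgebraSDP K G) :
    (⁅x, y⁆).fst = x.fst + single x.snd (1 : K) * y.fst
      - single (x.snd * y.snd * x.snd⁻¹ * y.snd⁻¹) (1 : K)
        * (y.fst + single y.snd (1 : K) * x.fst) := by
  obtain ⟨a, g⟩ := x; obtain ⟨b, h⟩ := y
  show a + single g (1:K) * b + single (g*h) (1:K) * (-(single g⁻¹ (1:K) * a))
      + single ((g*h)*g⁻¹) (1:K) * (-(single h⁻¹ (1:K) * b)) = _
  simp only [mul_neg, ← mul_assoc, single_mul_single, one_mul, mul_add,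
    inv_mul_cancel_right, mul_inv_cancel_right]
  abel

lemma commutator_snd (x y : GroupAlgebraSDP K G) :
    (⁅x, y⁆).snd = x.snd * y.snd * x.snd⁻¹ * y.snd⁻¹ := rfl

lemma derivedSeries_le_SP (n : ℕ) :
    derivedSeries (GroupAlgebraSDP K G) (n + 1) ≤ SP K G n (n + 1) := by
  rw [derivedSeries_succ (GroupAlgebraSDP K G) n]
  refine Subgroup.commutator_le.mpr fun x hx y hy => ?_
  have hg : x.snd ∈ derivedSeries G n := snd_mem_of_mem hx
  have hh : y.snd ∈ derivedSeries G n := snd_mem_of_mem hy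
  constructor
  · show (⁅x, y⁆).fst ∈ Ispan K G n
    rw [commutator_fst]
    have hk : x.snd * y.snd * x.snd⁻¹ * y.snd⁻¹ ∈ derivedSeries G n :=
      mul_mem (mul_mem (mul_mem hg hh) (inv_mem hg)) (inv_mem hh)
    have m1 : -((single y.snd (1:K) - 1) * x.fst) + (single x.snd (1:K) - 1) * y.fst
        ∈ Ispan K G n :=
      add_mem (neg_mem (sub_one_mul_mem_Ispan hh x.fst)) (sub_one_mul_mem_Ispan hg y.fst)
    have m2 : (single (x.snd * y.snd * x.snd⁻¹ * y.snd⁻¹) (1:K) - 1)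
        * (y.fst + single y.snd (1:K) * x.fst) ∈ Ispan K G n :=
      sub_one_mul_mem_Ispan hk _
    have heq : x.fst + single x.snd (1 : K) * y.fst
        - single (x.snd * y.snd * x.snd⁻¹ * y.snd⁻¹) (1 : K)
          * (y.fst + single y.snd (1 : K) * x.fst)
        = (-((single y.snd (1:K) - 1) * x.fst) + (single x.snd (1:K) - 1) * y.fst)
          + -((single (x.snd * y.snd * x.snd⁻¹ * y.snd⁻¹) (1:K) - 1)
            * (y.fst + single y.snd (1:K) * x.fst)) := by
      noncomm_ring
    rw [heq]
    exact add_mem m1 (neg_mem m2)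
  · show (⁅x, y⁆).snd ∈ derivedSeries G (n + 1)
    rw [commutator_snd, derivedSeries_succ, ← commutatorElement_def]
    exact Subgroup.commutator_mem_commutator hg hh

lemma comm_step {n : ℕ} (b : MonoidAlgebra K G) (d : G)
    (hb : (⟨b, 1⟩ : GroupAlgebraSDP K G) ∈ derivedSeries (GroupAlgebraSDP K G) n)
    (hd : (⟨0, d⟩ : GroupAlgebraSDP K G) ∈ derivedSeries (GroupAlgebraSDP K G) n) :
    (⟨b - single d (1 : K) * b, 1⟩ : GroupAlgebraSDP K G)
      ∈ derivedSeries (GroupAlgebraSDP K G) (n + 1) := by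
  have key : (⁅(⟨b, 1⟩ : GroupAlgebraSDP K G), (⟨0, d⟩ : GroupAlgebraSDP K G)⁆)
      = ⟨b - single d (1 : K) * b, 1⟩ := by
    have h1 := commutator_fst (⟨b, 1⟩ : GroupAlgebraSDP K G) ⟨0, d⟩
    have h2 := commutator_snd (⟨b, 1⟩ : GroupAlgebraSDP K G) ⟨0, d⟩
    simp only [one_mul, mul_zero, add_zero, zero_add, mul_one, one_mul] at h1 h2
    have : (⁅(⟨b, 1⟩ : GroupAlgebraSDP K G), (⟨0, d⟩ : GroupAlgebraSDP K G)⁆)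
        = ⟨(⁅(⟨b, 1⟩ : GroupAlgebraSDP K G), (⟨0, d⟩ : GroupAlgebraSDP K G)⁆).fst,
           (⁅(⟨b, 1⟩ : GroupAlgebraSDP K G), (⟨0, d⟩ : GroupAlgebraSDP K G)⁆).snd⟩ := rfl
    rw [this, h1, h2]
    simp [← MonoidAlgebra.one_def]
  rw [derivedSeries_succ, ← key]
  exact Subgroup.commutator_mem_commutator hb hd

lemma sum_ident {H : Subgroup G} [Fintype H] {d : G} (hd : d ∈ H) :
    (1 - single d (1 : K)) * (∑ e : H, (single (e : G) (1 : K) - 1))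
      = (Fintype.card H) • (single d (1 : K) - 1) := by
  rw [Finset.mul_sum]
  have h1 : ∀ e : H, (1 - single d (1 : K)) * (single (e : G) (1 : K) - 1)
      = (single d (1 : K) - 1) + (single (e : G) (1 : K) - single (d * (e : G)) (1 : K)) := by
    intro e
    simp only [mul_sub, sub_mul, one_mul, mul_one, single_mul_single]
    abel
  rw [Finset.sum_congr rfl (fun e _ => h1 e), Finset.sum_add_distrib, Finset.sum_const,
    Finset.card_univ]
  have h2 : ∑ e : H, (single ((e : G)) (1 : K) - single (d * (e : G)) (1 : K)) = 0 := by
    rw [Finset.sum_sub_distrib, sub_eq_zero]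
    exact (Fintype.sum_equiv (Equiv.mulLeft (⟨d, hd⟩ : H))
      (fun e => single (d * (e : G)) (1 : K)) (fun e => single ((e : G)) (1 : K))
      (fun e => rfl)).symm
  rw [h2, add_zero]

lemma mk_eq_mul (a : MonoidAlgebra K G) (g : G) :
    (⟨a, g⟩ : GroupAlgebraSDP K G) = (⟨a, 1⟩ : GroupAlgebraSDP K G) * ⟨0, g⟩ := by
  rw [GroupAlgebraSDP.mul_def]
  simp

/-- The hard inclusion, given that the generators lie in the derived subgroup. -/
lemma SP_le_derivedSeries (n : ℕ)
    (hgen : ∀ d ∈ derivedSeries G n, ∀ (g' : G) (c : K),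
      (⟨(single d (1 : K) - 1) * single g' c, 1⟩ : GroupAlgebraSDP K G)
        ∈ derivedSeries (GroupAlgebraSDP K G) (n + 1)) :
    SP K G n (n + 1) ≤ derivedSeries (GroupAlgebraSDP K G) (n + 1) := by
  rintro ⟨a, g⟩ ⟨ha, hg⟩
  rw [mk_eq_mul]
  refine mul_mem ?_ (iota_mem hg)
  have main : ∀ a, a ∈ Ispan K G n → ∀ c : K,
      (⟨c • a, 1⟩ : GroupAlgebraSDP K G) ∈ derivedSeries (GroupAlgebraSDP K G) (n + 1) := by
    intro a ha
    refine Submodule.span_induction ?_ ?_ ?_ ?_ ha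
    · rintro w ⟨d, hd, g', rfl⟩ c
      have h1 : c • ((single d (1 : K) - 1) * single g' (1 : K))
          = (single d (1 : K) - 1) * single g' c := by
        rw [← mul_smul_comm, MonoidAlgebra.smul_single', mul_one]

      rw [h1]
      exact hgen d hd g' c
    · intro c
      simpa [GroupAlgebraSDP.one_def] using one_mem (derivedSeries (GroupAlgebraSDP K G) (n + 1))
    · intro x y _ _ hx hy c
      have h1 : (⟨c • (x + y), 1⟩ : GroupAlgebraSDP K G) = ⟨c • x, 1⟩ * ⟨c • y, 1⟩ := by
        rw [GroupAlgebraSDP.mul_def]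
        simp [smul_add, MonoidAlgebra.one_def.symm]
      rw [h1]
      exact mul_mem (hx c) (hy c)
    · intro r x _ hx c
      rw [smul_smul]
      exact hx (c * r)
  have := main a ha 1
  simpa using this

end Aux

/-- let `G` be a finite group, `K` a field of prime characteristic `p`
not dividing `|G|`, and `E₀ = K[G] ⋊ G`.  With `D_m` the derived series of `G` and
`E_m` the derived series of `E₀`, for every `m ≥ 1` the subgroup `E_m` consists exactly
of the pairs `(a,g)` with `a ∈ ω(K[D_{m−1}])·K[G]` (the `K`-span of the elements
`(d − 1)·g`, `d ∈ D_{m−1}`, `g ∈ G`) and `g ∈ D_m`. -/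


theorem derivedSeries_groupAlgebraSDP
    (K G : Type*) [Field K] [Group G] [Fintype G]
    (p : ℕ) (hp : p.Prime) [CharP K p] (hpG : ¬ p ∣ Fintype.card G)
    (m : ℕ) (hm : 1 ≤ m) :
    (derivedSeries (GroupAlgebraSDP K G) m : Set (GroupAlgebraSDP K G)) =
      {x : GroupAlgebraSDP K G |
        x.fst ∈ Submodule.span K
          {w : MonoidAlgebra K G | ∃ d ∈ derivedSeries G (m - 1), ∃ g : G,
            w = (MonoidAlgebra.single d (1 : K) - 1) * MonoidAlgebra.single g (1 : K)} ∧
        x.snd ∈ derivedSeries G m} := by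
  induction m, hm using Nat.le_induction with
  | base =>
    have hsub := derivedSeries_le_SP (K := K) (G := G) 0
    have hsup : SP K G 0 (0 + 1) ≤ derivedSeries (GroupAlgebraSDP K G) (0 + 1) := by
      apply SP_le_derivedSeries
      intro d _ g' c
      have hb : (⟨-(single g' c), 1⟩ : GroupAlgebraSDP K G)
          ∈ derivedSeries (GroupAlgebraSDP K G) 0 := by
        rw [derivedSeries_zero]; exact Subgroup.mem_top _
      have hd' : (⟨0, d⟩ : GroupAlgebraSDP K G)
          ∈ derivedSeries (GroupAlgebraSDP K G) 0 := by
        rw [derivedSeries_zero]; exact Subgroup.mem_top _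
      have h := comm_step _ d hb hd'
      have heq : -(single g' c) - single d (1 : K) * -(single g' c)
          = (single d (1 : K) - 1) * single g' c := by noncomm_ring
      rwa [heq] at h
    ext x
    exact ⟨fun hx => hsub hx, fun hx => hsup hx⟩
  | succ n hn ih =>
    have hsub := derivedSeries_le_SP (K := K) (G := G) n
    have hsup : SP K G n (n + 1) ≤ derivedSeries (GroupAlgebraSDP K G) (n + 1) := by
      apply SP_le_derivedSeries
      intro d hd g' c
      classical
      haveI : Fintype (derivedSeries G n) := Fintype.ofFinite _
      set N := Fintype.card (derivedSeries G n) with hNdef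
      have hNK : (N : K) ≠ 0 := by
        intro h0
        rw [CharP.cast_eq_zero_iff K p] at h0
        refine hpG (h0.trans ?_)
        have hdvd := Subgroup.card_subgroup_dvd_card (derivedSeries G n)
        rwa [Nat.card_eq_fintype_card, Nat.card_eq_fintype_card] at hdvd
      set X : MonoidAlgebra K G := ∑ e : (derivedSeries G n), (single (e : G) (1 : K) - 1)
        with hX
      set b : MonoidAlgebra K G := (N : K)⁻¹ • (X * single g' c) with hb
      have hbI : b ∈ Ispan K G (n - 1) := by
        rw [hb, hX, Finset.sum_mul]
        refine Submodule.smul_mem _ _ (Submodule.sum_mem _ fun e _ => ?_)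
        refine sub_one_mul_mem_Ispan ?_ _
        have h1 : derivedSeries G n ≤ derivedSeries G (n - 1) := by
          conv_lhs => rw [← Nat.succ_pred_eq_of_pos hn]
          exact derivedSeries_succ_le _
        exact h1 e.2
      have hbE : (⟨b, 1⟩ : GroupAlgebraSDP K G)
          ∈ derivedSeries (GroupAlgebraSDP K G) n := by
        have hmem : (⟨b, 1⟩ : GroupAlgebraSDP K G) ∈
            ({x : GroupAlgebraSDP K G |
              x.fst ∈ Submodule.span K
                {w : MonoidAlgebra K G | ∃ d ∈ derivedSeries G (n - 1), ∃ g : G,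
                  w = (MonoidAlgebra.single d (1 : K) - 1) * MonoidAlgebra.single g (1 : K)} ∧
              x.snd ∈ derivedSeries G n} : Set (GroupAlgebraSDP K G)) := ⟨hbI, one_mem _⟩
        rwa [← ih] at hmem
      have hdE := iota_mem (K := K) hd
      have h := comm_step b d hbE hdE
      have heq : b - single d (1 : K) * b = (single d (1 : K) - 1) * single g' c := by
        have e1 : b - single d (1 : K) * b = (1 - single d (1 : K)) * b := by noncomm_ring
        rw [e1, hb, hX, mul_smul_comm, ← mul_assoc, sum_ident hd, smul_mul_assoc,
          ← Nat.cast_smul_eq_nsmul K, smul_smul, inv_mul_cancel₀ hNK, one_smul]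
      rwa [heq] at h
    ext x
    exact ⟨fun hx => hsub hx, fun hx => hsup hx⟩
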